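/- arXiv:2001.07103 — 7 statements merged into one kernel-verified Lean document; each statement's English description precedes it below -/
import Mathlib

section
/- For any k with 1 < k < n, the maximum over i in {k+1,...,n} of d_i equals the maximum over i in {k+1,...,n} of d_i^(k), where d_i is the length of the longest increasing subsequence of a_1,...,a_n passing through (containing) a_i, and d_i^(k) is the length of the longest increasing subsequence passing through a_i that excludes all items a_{k+1},...,a_{i-1}. -/
/-- For 1 < k < n, the max over i ∈ {k+1,...,n} of d_i equals the max over
i ∈ {k+1,...,n} of d_i^(k), where d_i is the length of the longest strictly increasing
subsequence of a_1,...,a_n containing a_i, and d_i^(k) additionally avoids indices in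
{k+1,...,i-1}. -/
theorem stmt_0 (n k : ℕ) (a : ℕ → ℝ) (hk1 : 1 < k) (hkn : k < n)
    (d dk : ℕ → ℕ)
    (hd : ∀ i, d i = sSup {m | ∃ S : Finset ℕ, S ⊆ Finset.Icc 1 n ∧
        (∀ p ∈ S, ∀ q ∈ S, p < q → a p < a q) ∧ i ∈ S ∧ S.card = m})
    (hdk : ∀ i, dk i = sSup {m | ∃ S : Finset ℕ, S ⊆ Finset.Icc 1 n ∧
        (∀ p ∈ S, ∀ q ∈ S, p < q → a p < a q) ∧ i ∈ S ∧
        (∀ j ∈ S, ¬ (k < j ∧ j < i)) ∧ S.card = m}) :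
    (Finset.Ioc k n).sup d = (Finset.Ioc k n).sup dk := by
  have hboundd : ∀ i, BddAbove {m | ∃ S : Finset ℕ, S ⊆ Finset.Icc 1 n ∧
      (∀ p ∈ S, ∀ q ∈ S, p < q → a p < a q) ∧ i ∈ S ∧ S.card = m} := by
    intro i
    refine ⟨n, ?_⟩
    rintro m ⟨S, hS, -, -, rfl⟩
    calc S.card ≤ (Finset.Icc 1 n).card := Finset.card_le_card hS
      _ = n := by simp
  have hbounddk : ∀ i, BddAbove {m | ∃ S : Finset ℕ, S ⊆ Finset.Icc 1 n ∧
      (∀ p ∈ S, ∀ q ∈ S, p < q → a p < a q) ∧ i ∈ S ∧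
      (∀ j ∈ S, ¬ (k < j ∧ j < i)) ∧ S.card = m} := by
    intro i
    refine ⟨n, ?_⟩
    rintro m ⟨S, hS, -, -, -, rfl⟩
    calc S.card ≤ (Finset.Icc 1 n).card := Finset.card_le_card hS
      _ = n := by simp
  apply le_antisymm
  · apply Finset.sup_le
    intro i hi
    rw [Finset.mem_Ioc] at hi
    rw [hd i]
    apply csSup_le
    · refine ⟨1, {i}, ?_, ?_, by simp, by simp⟩
      · intro x hx; simp at hx; subst hx; simp [Finset.mem_Icc]; omega
      · intro p hp q hq h; simp at hp hq; omega
    rintro m ⟨S, hS, hinc, hiS, rfl⟩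
    have hTne : (S.filter (k < ·)).Nonempty :=
      ⟨i, Finset.mem_filter.mpr ⟨hiS, hi.1⟩⟩
    set i' := (S.filter (k < ·)).min' hTne with hi'
    have hi'T : i' ∈ S.filter (k < ·) := Finset.min'_mem _ hTne
    have hi'S : i' ∈ S := (Finset.mem_filter.mp hi'T).1
    have hki' : k < i' := (Finset.mem_filter.mp hi'T).2
    have hi'n : i' ≤ n := (Finset.mem_Icc.mp (hS hi'S)).2
    have hle : S.card ≤ dk i' := by
      rw [hdk i']
      apply le_csSup (hbounddk i')
      refine ⟨S, hS, hinc, hi'S, ?_, rfl⟩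
      rintro j hj ⟨hkj, hji⟩
      have h2 : i' ≤ j := Finset.min'_le _ j (Finset.mem_filter.mpr ⟨hj, hkj⟩)
      omega
    exact hle.trans (Finset.le_sup (Finset.mem_Ioc.mpr ⟨hki', hi'n⟩))
  · apply Finset.sup_le
    intro i hi
    rw [Finset.mem_Ioc] at hi
    have hle : dk i ≤ d i := by
      rw [hd i, hdk i]
      apply csSup_le_csSup (hboundd i)
      · refine ⟨1, {i}, ?_, ?_, by simp, ?_, by simp⟩
        · intro x hx; simp at hx; subst hx; simp [Finset.mem_Icc]; omega
        · intro p hp q hq h; simp at hp hq; omega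
        · intro j hj; simp at hj; omega
      · rintro m ⟨S, hS, hinc, hiS, -, rfl⟩; exact ⟨S, hS, hinc, hiS, rfl⟩
    exact hle.trans (Finset.le_sup (Finset.mem_Ioc.mpr hi))
end

section
/- The length of the longest strictly increasing subsequence of a_1,...,a_n equals max( max over 1 ≤ i ≤ k of l_i, max over k < i ≤ n of d_i^(k) ), for any fixed k with 1 < k < n (assuming n ≥ 1 so the sequence is nonempty). -/
/-- The length of the longest strictly increasing subsequence of a_1,...,a_n
equals max( max_{1 ≤ i ≤ k} l_i, max_{k < i ≤ n} d_i^(k) ) for any 1 < k < n, n ≥ 1. -/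
theorem stmt_3 (n k : ℕ) (a : ℕ → ℝ) (hn : 1 ≤ n) (hk1 : 1 < k) (hkn : k < n)
    (l dk : ℕ → ℕ) (L : ℕ)
    (hl : ∀ j, l j = sSup {m | ∃ S : Finset ℕ, S ⊆ Finset.Icc 1 j ∧
        (∀ p ∈ S, ∀ q ∈ S, p < q → a p < a q) ∧ j ∈ S ∧ S.card = m})
    (hdk : ∀ i, dk i = sSup {m | ∃ S : Finset ℕ, S ⊆ Finset.Icc 1 n ∧
        (∀ p ∈ S, ∀ q ∈ S, p < q → a p < a q) ∧ i ∈ S ∧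
        (∀ j ∈ S, ¬ (k < j ∧ j < i)) ∧ S.card = m})
    (hL : L = sSup {m | ∃ S : Finset ℕ, S ⊆ Finset.Icc 1 n ∧
        (∀ p ∈ S, ∀ q ∈ S, p < q → a p < a q) ∧ S.card = m}) :
    L = max ((Finset.Icc 1 k).sup l) ((Finset.Ioc k n).sup dk) := by
  set T := {m | ∃ S : Finset ℕ, S ⊆ Finset.Icc 1 n ∧
      (∀ p ∈ S, ∀ q ∈ S, p < q → a p < a q) ∧ S.card = m} with hT
  have hbdd : BddAbove T := by
    refine ⟨n, fun m hm => ?_⟩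
    obtain ⟨S, hS, _, rfl⟩ := hm
    calc S.card ≤ (Finset.Icc 1 n).card := Finset.card_le_card hS
      _ ≤ n := by simp
  have hne : T.Nonempty := by
    refine ⟨1, {1}, ?_, by simp, by simp⟩
    simp [hn]
  -- upper bound direction: RHS ≤ L
  have hle1 : (Finset.Icc 1 k).sup l ≤ L := by
    apply Finset.sup_le
    intro i hi
    simp only [Finset.mem_Icc] at hi
    rw [hl i, hL]
    apply csSup_le_csSup hbdd
    · exact ⟨1, {i}, by simp [hi.1], by simp, by simp, by simp⟩
    · rintro m ⟨S, hS, hinc, hiS, rfl⟩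
      exact ⟨S, hS.trans (Finset.Icc_subset_Icc_right (le_trans hi.2 hkn.le)),
        hinc, rfl⟩
  have hle2 : (Finset.Ioc k n).sup dk ≤ L := by
    apply Finset.sup_le
    intro i hi
    simp only [Finset.mem_Ioc] at hi
    have hi1 : 1 ≤ i := le_trans hk1.le hi.1.le
    rw [hdk i, hL]
    apply csSup_le_csSup hbdd
    · exact ⟨1, {i}, by simp [hi1, hi.2], by simp, by simp,
        by simp, by simp⟩
    · rintro m ⟨S, hS, hinc, _, _, rfl⟩
      exact ⟨S, hS, hinc, rfl⟩
  -- L ≤ RHS : pick a witness of the sup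
  have hmem : L ∈ T := by rw [hL]; exact Nat.sSup_mem hne hbdd
  obtain ⟨S, hS, hinc, hcard⟩ := hmem
  have hL1 : 1 ≤ L := by
    rw [hL]
    exact le_csSup hbdd ⟨{1}, by simp [hn], by simp, by simp⟩
  have hSne : S.Nonempty := by
    rw [← Finset.card_pos, hcard]; exact hL1
  have hmain : L ≤ max ((Finset.Icc 1 k).sup l) ((Finset.Ioc k n).sup dk) := by
    by_cases hcase : (S ∩ Finset.Ioc k n).Nonempty
    · -- case: some element above k; pick the least one
      set i := (S ∩ Finset.Ioc k n).min' hcase with hi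
      have himem := (S ∩ Finset.Ioc k n).min'_mem hcase
      simp only [Finset.mem_inter, Finset.mem_Ioc] at himem
      have hiIoc : i ∈ Finset.Ioc k n := Finset.mem_Ioc.2 himem.2
      have hLdk : L ≤ dk i := by
        rw [hdk i]
        apply le_csSup (hbdd.mono ?_)
        · refine ⟨S, hS, hinc, himem.1, ?_, hcard⟩
          rintro j hj ⟨hkj, hji⟩
          have : j ∈ S ∩ Finset.Ioc k n := by
            refine Finset.mem_inter.2 ⟨hj, Finset.mem_Ioc.2 ⟨hkj, ?_⟩⟩
            exact (Finset.mem_Icc.1 (hS hj)).2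
          exact absurd (Finset.min'_le _ _ this) (not_le.2 hji)
        · rintro m ⟨S', h1, h2, _, _, h5⟩
          exact ⟨S', h1, h2, h5⟩
      exact le_max_of_le_right (hLdk.trans (Finset.le_sup hiIoc))
    · -- case: all elements ≤ k; take the maximum element
      have hall : ∀ j ∈ S, j ≤ k := by
        intro j hj
        by_contra h
        push_neg at h
        exact hcase ⟨j, Finset.mem_inter.2 ⟨hj, Finset.mem_Ioc.2
          ⟨h, (Finset.mem_Icc.1 (hS hj)).2⟩⟩⟩
      set i := S.max' hSne with hi
      have himem := S.max'_mem hSne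
      have hiIcc : i ∈ Finset.Icc 1 k :=
        Finset.mem_Icc.2 ⟨(Finset.mem_Icc.1 (hS himem)).1, hall i himem⟩
      have hLl : L ≤ l i := by
        rw [hl i]
        apply le_csSup (hbdd.mono ?_)
        · refine ⟨S, ?_, hinc, himem, hcard⟩
          intro j hj
          exact Finset.mem_Icc.2 ⟨(Finset.mem_Icc.1 (hS hj)).1, S.le_max' j hj⟩
        · rintro m ⟨S', h1, h2, _, h4⟩
          refine ⟨S', h1.trans (Finset.Icc_subset_Icc_right ?_), h2, h4⟩
          exact le_trans (Finset.mem_Icc.1 hiIcc).2 hkn.le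
      exact le_max_of_le_left (hLl.trans (Finset.le_sup hiIcc))
  exact le_antisymm hmain (max_le hle1 hle2)
end

section
/- Floyd-Warshall is correct with in-place computation: after step k of the in-place update M[i][j] := min(M[i][j], M[i][k] + M[k][j]) (performed in any order over (i,j)), the resulting matrix equals the matrix M^(k) defined by the non-in-place recurrence, assuming M[k][k] = 0 before step k. -/
/-- In-place Floyd-Warshall is correct: performing the updates
M[i][j] := min(M[i][j], M[i][k] + M[k][j]) once for every pair (i,j), in any order,
yields exactly the matrix given by the non-in-place recurrence, assuming M[k][k] = 0. -/
theorem stmt_9 (n : ℕ) (k : Fin n) (Mp : Fin n → Fin n → EReal)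
    (hkk : Mp k k = 0)
    (step : (Fin n → Fin n → EReal) → (Fin n × Fin n) → (Fin n → Fin n → EReal))
    (hstep : ∀ M p i' j', step M p i' j' =
      if i' = p.1 ∧ j' = p.2 then min (M p.1 p.2) (M p.1 k + M k p.2) else M i' j') :
    ∀ l : List (Fin n × Fin n), l.Nodup → (∀ p, p ∈ l) →
      ∀ i j, (l.foldl step Mp) i j = min (Mp i j) (Mp i k + Mp k j) := by
  have aux : ∀ l : List (Fin n × Fin n), l.Nodup →
      ∀ M : Fin n → Fin n → EReal,
      (∀ i, M i k = Mp i k) → (∀ j, M k j = Mp k j) →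
      (∀ p : Fin n × Fin n, p ∈ l → M p.1 p.2 = Mp p.1 p.2) →
      (∀ p : Fin n × Fin n, p ∉ l → M p.1 p.2 = min (Mp p.1 p.2) (Mp p.1 k + Mp k p.2)) →
      ∀ i j, (l.foldl step M) i j = min (Mp i j) (Mp i k + Mp k j) := by
    intro l
    induction l with
    | nil =>
      intro _ M _ _ _ hout i j
      simpa using hout (i, j) (by simp)
    | cons p l ih =>
      intro hnd M h1 h2 hin hout i j
      have hnd' : l.Nodup := hnd.of_cons
      have hpnl : p ∉ l := (List.nodup_cons.mp hnd).1
      have hMkk : M k k = 0 := by rw [h2 k, hkk]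
      have hMp : M p.1 p.2 = Mp p.1 p.2 := hin p (by simp)
      set M' := step M p with hM'
      have h1' : ∀ i, M' i k = Mp i k := by
        intro i
        rw [hM', hstep]
        by_cases h : i = p.1 ∧ k = p.2
        · simp only [h, if_true]
          rw [← h.1, ← h.2, hMkk, add_zero, min_self, h1]; simp
        · rw [if_neg h, h1]
      have h2' : ∀ j, M' k j = Mp k j := by
        intro j
        rw [hM', hstep]
        by_cases h : k = p.1 ∧ j = p.2
        · simp only [h, if_true]
          rw [← h.1, ← h.2, hMkk, zero_add, min_self, h2]; simp
        · rw [if_neg h, h2]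
      have hin' : ∀ q : Fin n × Fin n, q ∈ l → M' q.1 q.2 = Mp q.1 q.2 := by
        intro q hq
        have hqp : q ≠ p := fun h => hpnl (h ▸ hq)
        rw [hM', hstep, if_neg, hin q (by simp [hq])]
        intro h
        exact hqp (Prod.ext h.1 h.2)
      have hout' : ∀ q : Fin n × Fin n, q ∉ l →
          M' q.1 q.2 = min (Mp q.1 q.2) (Mp q.1 k + Mp k q.2) := by
        intro q hq
        by_cases hqp : q = p
        · subst hqp
          rw [hM', hstep, if_pos ⟨rfl, rfl⟩, hMp, h1, h2]
        · rw [hM', hstep, if_neg, hout q (by simp [hq, hqp])]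
          intro h
          exact hqp (Prod.ext h.1 h.2)
      simpa using ih hnd' M' h1' h2' hin' hout' i j
  intro l hnd hall i j
  exact aux l hnd Mp (fun _ => rfl) (fun _ => rfl) (fun p _ => rfl)
    (fun p hp => absurd (hall p) hp) i j
end

section
/- If τ : X → ℝ satisfies τ(x) ≤ min(max(v(x,y), τ(y)), ω(x)) for all adjacent x, y and is maximal (pointwise) among all such functions, then τ satisfies the equality τ(x) = min over neighbors y of x of min(max(v(x,y), τ(y)), ω(x)) for every non-isolated vertex x... in particular, for each x there exists a neighbor y with τ(x) = min(max(v(x,y), τ(y)), ω(x)), or τ(x) = ω(x). -/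
/-- If τ is a valid flooding (τ(x) ≤ max(v(x,y), τ(y)) on edges and
τ ≤ ω) and is pointwise maximal among valid floodings, then for every non-isolated
vertex x, τ(x) = min over neighbors y of min(max(v(x,y), τ(y)), ω(x)); in particular
there is a neighbor y with τ(x) = min(max(v(x,y), τ(y)), ω(x)), or τ(x) = ω(x). -/
theorem stmt_11 {X : Type*} [Fintype X] (Adj : X → X → Prop) [DecidableRel Adj]
    (hsymm : ∀ x y, Adj x y → Adj y x)
    (v : X → X → ℝ) (ω : X → ℝ) (τ : X → ℝ)
    (hvalid1 : ∀ x y, Adj x y → τ x ≤ max (v x y) (τ y))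
    (hvalid2 : ∀ x, τ x ≤ ω x)
    (hmax : ∀ τ' : X → ℝ, (∀ x y, Adj x y → τ' x ≤ max (v x y) (τ' y)) →
      (∀ x, τ' x ≤ ω x) → ∀ x, τ' x ≤ τ x) :
    ∀ x, ∀ hne : (Finset.univ.filter (fun y => Adj x y)).Nonempty,
      τ x = (Finset.univ.filter (fun y => Adj x y)).inf' hne
          (fun y => min (max (v x y) (τ y)) (ω x)) ∧
      ((∃ y, Adj x y ∧ τ x = min (max (v x y) (τ y)) (ω x)) ∨ τ x = ω x) := by
  intro x hne
  classical
  set s := Finset.univ.filter (fun y => Adj x y) with hs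
  set m := s.inf' hne (fun y => min (max (v x y) (τ y)) (ω x)) with hm
  have hmem : ∀ y ∈ s, Adj x y := by
    intro y hy; simpa [hs] using hy
  -- τ x ≤ m
  have hle : τ x ≤ m := by
    apply Finset.le_inf'
    intro y hy
    exact le_min (hvalid1 x y (hmem y hy)) (hvalid2 x)
  -- m ≤ τ x via maximality
  have hmw : m ≤ ω x := by
    obtain ⟨y, hy⟩ := hne
    exact le_trans (Finset.inf'_le _ hy) (min_le_right _ _)
  set τ' : X → ℝ := fun z => if z = x then max (τ x) m else τ z with hτ'
  have hge : m ≤ τ x := by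
    have h1 : ∀ a b, Adj a b → τ' a ≤ max (v a b) (τ' b) := by
      intro a b hab
      by_cases ha : a = x
      · by_cases hb : b = x
        · simp only [hτ', if_pos ha, if_pos hb, ha, hb]
          exact le_max_right _ _
        · simp only [hτ', if_pos ha, if_neg hb, ha]
          apply max_le (hvalid1 x b (ha ▸ hab))
          have hbmem : b ∈ s := by simp [hs, ha ▸ hab]
          exact le_trans (Finset.inf'_le _ hbmem) (min_le_left _ _)
      · by_cases hb : b = x
        · simp only [hτ', if_neg ha, if_pos hb, hb]
          exact le_trans (hvalid1 a x (hb ▸ hab))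
            (max_le_max le_rfl (le_max_left _ _))
        · simp only [hτ', if_neg ha, if_neg hb]
          exact hvalid1 a b hab
    have h2 : ∀ z, τ' z ≤ ω z := by
      intro z
      by_cases hz : z = x
      · simp only [hτ', if_pos hz, hz]
        exact max_le (hvalid2 x) hmw
      · simp only [hτ', if_neg hz]; exact hvalid2 z
    have := hmax τ' h1 h2 x
    simp only [hτ', if_pos rfl] at this
    exact le_trans (le_max_right _ _) this
  have heq : τ x = m := le_antisymm hle hge
  refine ⟨heq, Or.inl ?_⟩
  obtain ⟨y, hy, hyeq⟩ := Finset.exists_mem_eq_inf' hne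
    (fun y => min (max (v x y) (τ y)) (ω x))
  exact ⟨y, hmem y hy, by rw [heq, hm, hyeq]⟩
end

section
/- Berge's iteration is monotone decreasing and its fixed point is the maximal flooding: defining τ^(0) = ω and τ^(k)_i = min(τ^(k-1)_i, min over neighbors j of max(v_{ij}, τ^(k-1)_j)), the sequence τ^(k) is pointwise nonincreasing in k, every valid flooding is a pointwise lower bound of every τ^(k), and if τ^(k) = τ^(k-1) then τ^(k) is the maximal valid flooding. -/
/-- Berge's iteration τ^(0) = ω,
τ^(k)_i = min(τ^(k-1)_i, min over neighbors j of max(v_{ij}, τ^(k-1)_j)) is pointwise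
nonincreasing, every valid flooding is a pointwise lower bound of every τ^(k), and if
τ^(k+1) = τ^(k) then τ^(k+1) is the maximal valid flooding. -/
theorem stmt_13 {X : Type*} [Fintype X] (Adj : X → X → Prop) [DecidableRel Adj]
    (hsymm : ∀ x y, Adj x y → Adj y x) (v : X → X → ℝ) (ω : X → ℝ)
    (τs : ℕ → X → ℝ)
    (h0 : τs 0 = ω)
    (hiso : ∀ k x, (Finset.univ.filter (fun y => Adj x y)) = ∅ → τs (k + 1) x = τs k x)
    (hstep : ∀ k x (hne : (Finset.univ.filter (fun y => Adj x y)).Nonempty),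
      τs (k + 1) x = min (τs k x)
        ((Finset.univ.filter (fun y => Adj x y)).inf' hne
          (fun y => max (v x y) (τs k y)))) :
    (∀ k x, τs (k + 1) x ≤ τs k x) ∧
    (∀ τ : X → ℝ, (∀ x y, Adj x y → τ x ≤ max (v x y) (τ y)) → (∀ x, τ x ≤ ω x) →
      ∀ k x, τ x ≤ τs k x) ∧
    (∀ k, τs (k + 1) = τs k →
      ((∀ x y, Adj x y → τs (k + 1) x ≤ max (v x y) (τs (k + 1) y)) ∧
       (∀ x, τs (k + 1) x ≤ ω x) ∧
       (∀ τ : X → ℝ, (∀ x y, Adj x y → τ x ≤ max (v x y) (τ y)) → (∀ x, τ x ≤ ω x) →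
         ∀ x, τ x ≤ τs (k + 1) x))) := by

  have hdec : ∀ k x, τs (k + 1) x ≤ τs k x := by
    intro k x
    rcases (Finset.univ.filter (fun y => Adj x y)).eq_empty_or_nonempty with h | h
    · rw [hiso k x h]
    · rw [hstep k x h]; exact min_le_left _ _
  refine ⟨hdec, ?_, ?_⟩
  · intro τ hflood hceil k
    induction k with
    | zero => intro x; rw [h0]; exact hceil x
    | succ k ih =>
      intro x
      rcases (Finset.univ.filter (fun y => Adj x y)).eq_empty_or_nonempty with h | h
      · rw [hiso k x h]; exact ih x
      · rw [hstep k x h]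
        refine le_min (ih x) (Finset.le_inf' h _ ?_)
        intro y hy
        simp only [Finset.mem_filter] at hy
        exact le_trans (hflood x y hy.2) (max_le_max_left _ (ih y))
  · intro k hfix
    have hle : ∀ m x, τs m x ≤ ω x := by
      intro m
      induction m with
      | zero => intro x; rw [h0]
      | succ m ih => intro x; exact le_trans (hdec m x) (ih x)
    refine ⟨?_, fun x => hle _ x, ?_⟩
    · intro x y hxy
      have hy : y ∈ Finset.univ.filter (fun z => Adj x z) := by
        simp [hxy]
      have hne : (Finset.univ.filter (fun z => Adj x z)).Nonempty := ⟨y, hy⟩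
      calc τs (k + 1) x ≤ (Finset.univ.filter (fun z => Adj x z)).inf' hne
            (fun z => max (v x z) (τs k z)) := by
            rw [hstep k x hne]; exact min_le_right _ _
        _ ≤ max (v x y) (τs k y) := Finset.inf'_le _ hy
        _ = max (v x y) (τs (k + 1) y) := by rw [hfix]
    · intro τ hflood hceil x
      have : ∀ m x, τ x ≤ τs m x := by
        intro m
        induction m with
        | zero => intro x; rw [h0]; exact hceil x
        | succ m ih =>
          intro x
          rcases (Finset.univ.filter (fun y => Adj x y)).eq_empty_or_nonempty with h | h
          · rw [hiso m x h]; exact ih x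
          · rw [hstep m x h]
            refine le_min (ih x) (Finset.le_inf' h _ ?_)
            intro y hy
            simp only [Finset.mem_filter] at hy
            exact le_trans (hflood x y hy.2) (max_le_max_left _ (ih y))
      exact this _ x
end

section
/- Berge's iteration terminates: on a finite graph with n vertices, the iteration τ^(k+1) = F(τ^(k)) starting from τ^(0) = ω reaches a fixed point after at most n iterations, i.e., τ^(n) = τ^(n+1). -/
namespace Stmt14Aux

variable {X : Type*} [Fintype X]

/-- Value of a walk starting at `x` visiting the list `l`. -/
def wv (v : X → X → ℝ) (ω : X → ℝ) : X → List X → ℝ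
  | x, [] => ω x
  | x, y :: l => max (v x y) (wv v ω y l)

lemma wv_suffix (v : X → X → ℝ) (ω : X → ℝ) :
    ∀ (q : List X) (x y : X) (r : List X),
      wv v ω y r ≤ wv v ω x (q ++ y :: r)
  | [], x, y, r => by
      simpa [wv] using le_max_right (v x y) (wv v ω y r)
  | a :: q, x, y, r => by
      refine le_trans (wv_suffix v ω q a y r) ?_
      simpa [wv] using le_max_right (v x a) (wv v ω a (q ++ y :: r))

/-- Any walk can be shortened to a duplicate-free walk of no greater value. -/
lemma shorten (Adj : X → X → Prop) (v : X → X → ℝ) (ω : X → ℝ) :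
    ∀ (n : ℕ) (l : List X) (x : X), l.length ≤ n → List.Chain Adj x l →
      ∃ l', List.Chain Adj x l' ∧ (x :: l').Nodup ∧ l' ⊆ x :: l ∧
        wv v ω x l' ≤ wv v ω x l := by
  intro n
  induction n with
  | zero =>
    intro l x hlen _
    have : l = [] := List.eq_nil_of_length_eq_zero (Nat.le_zero.mp hlen)
    subst this
    exact ⟨[], List.Chain.nil, by simp, by simp, le_rfl⟩
  | succ n ih =>
    intro l x hlen hc
    by_cases hx : x ∈ l
    · obtain ⟨q, r, rfl⟩ := List.append_of_mem hx
      have hcr : List.Chain Adj x r := (List.isChain_cons_split.mp hc).2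
      have hr : r.length ≤ n := by
        have := hlen
        simp [List.length_append] at this
        omega
      obtain ⟨l', h1, h2, h3, h4⟩ := ih r x hr hcr
      refine ⟨l', h1, h2, ?_, le_trans h4 (wv_suffix v ω q x x r)⟩
      intro a ha
      rcases List.mem_cons.mp (h3 ha) with h | h
      · simp [h]
      · simp [List.mem_append, h]
    · match l, hc with
      | [], _ => exact ⟨[], List.Chain.nil, by simp, by simp, le_rfl⟩
      | y :: t, hc =>
        rw [List.Chain, List.chain_cons] at hc
        have ht : t.length ≤ n := by simpa using hlen
        obtain ⟨t', h1, h2, h3, h4⟩ := ih t y ht hc.2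
        have hsub : ∀ a ∈ y :: t', a ∈ y :: t := by
          intro a ha
          rcases List.mem_cons.mp ha with h | h
          · simp [h]
          · exact h3 h
        refine ⟨y :: t', List.chain_cons.mpr ⟨hc.1, h1⟩, ?_, ?_, ?_⟩
        · exact List.nodup_cons.mpr ⟨fun hmem => hx (hsub x hmem), h2⟩
        · exact fun a ha => List.mem_cons_of_mem x (hsub a ha)
        · simpa [wv] using max_le_max le_rfl h4

section
variable (Adj : X → X → Prop) [DecidableRel Adj] (v : X → X → ℝ) (ω : X → ℝ)
  (τs : ℕ → X → ℝ)

lemma antitone_step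
    (hiso : ∀ k x, (Finset.univ.filter (fun y => Adj x y)) = ∅ → τs (k + 1) x = τs k x)
    (hstep : ∀ k x (hne : (Finset.univ.filter (fun y => Adj x y)).Nonempty),
      τs (k + 1) x = min (τs k x)
        ((Finset.univ.filter (fun y => Adj x y)).inf' hne
          (fun y => max (v x y) (τs k y))))
    (k : ℕ) (x : X) : τs (k + 1) x ≤ τs k x := by
  by_cases h : (Finset.univ.filter (fun y => Adj x y)) = ∅
  · exact (hiso k x h).le
  · rw [hstep k x (Finset.nonempty_iff_ne_empty.mpr h)]
    exact min_le_left _ _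

lemma tau_le_wv
    (h0 : τs 0 = ω)
    (hiso : ∀ k x, (Finset.univ.filter (fun y => Adj x y)) = ∅ → τs (k + 1) x = τs k x)
    (hstep : ∀ k x (hne : (Finset.univ.filter (fun y => Adj x y)).Nonempty),
      τs (k + 1) x = min (τs k x)
        ((Finset.univ.filter (fun y => Adj x y)).inf' hne
          (fun y => max (v x y) (τs k y)))) :
    ∀ (k : ℕ) (x : X) (l : List X), List.Chain Adj x l → l.length ≤ k →
      τs k x ≤ wv v ω x l := by
  intro k
  induction k with
  | zero =>
    intro x l _ hlen
    have : l = [] := List.eq_nil_of_length_eq_zero (Nat.le_zero.mp hlen)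
    subst this
    simp [wv, h0]
  | succ k ih =>
    intro x l hc hlen
    match l, hc with
    | [], _ =>
      exact le_trans (antitone_step Adj v τs hiso hstep k x)
        (ih x [] List.Chain.nil (Nat.zero_le k))
    | y :: t, hc =>
      rw [List.Chain, List.chain_cons] at hc
      have hy : y ∈ Finset.univ.filter (fun z => Adj x z) := by
        simp [hc.1]
      have hne : (Finset.univ.filter (fun z => Adj x z)).Nonempty := ⟨y, hy⟩
      rw [hstep k x hne]
      refine le_trans (min_le_right _ _) (le_trans (Finset.inf'_le _ hy) ?_)
      have := ih y t hc.2 (by simpa using hlen)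
      simpa [wv] using max_le_max le_rfl this

lemma exists_wv_le
    (h0 : τs 0 = ω)
    (hiso : ∀ k x, (Finset.univ.filter (fun y => Adj x y)) = ∅ → τs (k + 1) x = τs k x)
    (hstep : ∀ k x (hne : (Finset.univ.filter (fun y => Adj x y)).Nonempty),
      τs (k + 1) x = min (τs k x)
        ((Finset.univ.filter (fun y => Adj x y)).inf' hne
          (fun y => max (v x y) (τs k y)))) :
    ∀ (k : ℕ) (x : X), ∃ l, List.Chain Adj x l ∧ wv v ω x l ≤ τs k x := by
  intro k
  induction k with
  | zero =>
    intro x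
    exact ⟨[], List.Chain.nil, by simp [wv, h0]⟩
  | succ k ih =>
    intro x
    by_cases h : (Finset.univ.filter (fun y => Adj x y)) = ∅
    · obtain ⟨l, hc, hl⟩ := ih x
      exact ⟨l, hc, by rw [hiso k x h]; exact hl⟩
    · have hne := Finset.nonempty_iff_ne_empty.mpr h
      rcases le_total (τs k x)
        ((Finset.univ.filter (fun y => Adj x y)).inf' hne
          (fun y => max (v x y) (τs k y))) with hle | hle
      · obtain ⟨l, hc, hl⟩ := ih x
        refine ⟨l, hc, ?_⟩
        rw [hstep k x hne, min_eq_left hle]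
        exact hl
      · obtain ⟨y, hy, hyeq⟩ := Finset.exists_mem_eq_inf' hne
          (fun y => max (v x y) (τs k y))
        obtain ⟨t, hc, hl⟩ := ih y
        have hadj : Adj x y := by simpa using hy
        refine ⟨y :: t, List.chain_cons.mpr ⟨hadj, hc⟩, ?_⟩
        rw [hstep k x hne, min_eq_right hle, hyeq]
        simpa [wv] using max_le_max le_rfl hl

end

end Stmt14Aux

open Stmt14Aux in
/-- Berge's iteration terminates: on a finite graph with n vertices, the
iteration τ^(k+1) = F(τ^(k)) starting from τ^(0) = ω reaches a fixed point after at most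
n iterations, i.e. τ^(n) = τ^(n+1). -/
theorem stmt_14 {X : Type*} [Fintype X] (Adj : X → X → Prop) [DecidableRel Adj]
    (hsymm : ∀ x y, Adj x y → Adj y x) (v : X → X → ℝ) (ω : X → ℝ)
    (τs : ℕ → X → ℝ)
    (h0 : τs 0 = ω)
    (hiso : ∀ k x, (Finset.univ.filter (fun y => Adj x y)) = ∅ → τs (k + 1) x = τs k x)
    (hstep : ∀ k x (hne : (Finset.univ.filter (fun y => Adj x y)).Nonempty),
      τs (k + 1) x = min (τs k x)
        ((Finset.univ.filter (fun y => Adj x y)).inf' hne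
          (fun y => max (v x y) (τs k y)))) :
    τs (Fintype.card X + 1) = τs (Fintype.card X) := by
  funext x
  obtain ⟨l, hc, hl⟩ := exists_wv_le Adj v ω τs h0 hiso hstep (Fintype.card X + 1) x
  obtain ⟨l', h1, h2, h3, h4⟩ := shorten Adj v ω l.length l x le_rfl hc
  have hlen : l'.length ≤ Fintype.card X := by
    have := List.Nodup.length_le_card h2
    simp at this
    omega
  have hU := tau_le_wv Adj v ω τs h0 hiso hstep (Fintype.card X) x l' h1 hlen
  exact le_antisymm (antitone_step Adj v τs hiso hstep _ x)
    (le_trans hU (le_trans h4 hl))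
end

section
/- Dijkstra's invariant for the greedy selection: in a graph with nonnegative edge weights, if S is a set of vertices containing the source s such that for each u in S the tentative distance d(u) equals the true shortest-path distance from s, and for each v not in S, d(v) is the minimum over u ∈ S of d(u) + w(u,v) (∞ if no edge), then the vertex v* ∉ S minimizing d(v*) satisfies d(v*) = true shortest-path distance from s to v*. -/
open scoped ENNReal

/-- Cost of a walk given as a list of vertices, with nonnegative (possibly infinite)
edge weights; absent edges have weight ∞. -/
noncomputable def walkCost {V : Type*} (w : V → V → ℝ≥0∞) : List V → ℝ≥0∞
  | [] => 0
  | [_] => 0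
  | x :: y :: rest => w x y + walkCost w (y :: rest)

/-- Shortest-path distance from s to t. -/
noncomputable def gdist {V : Type*} (w : V → V → ℝ≥0∞) (s t : V) : ℝ≥0∞ :=
  sInf {c | ∃ l : List V, l.head? = some s ∧ l.getLast? = some t ∧ walkCost w l = c}

lemma walkCost_append_single {V : Type*} (w : V → V → ℝ≥0∞) :
    ∀ (l : List V) (u v : V), l.getLast? = some u →
      walkCost w (l ++ [v]) = walkCost w l + w u v
  | [], u, v, h => by simp at h
  | [x], u, v, h => by
      simp only [List.getLast?_singleton, Option.some.injEq] at h
      subst h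
      simp [walkCost]
  | x :: y :: rest, u, v, h => by
      have hlast : (y :: rest).getLast? = some u := by
        rw [List.getLast?_cons_cons] at h; exact h
      have ih := walkCost_append_single w (y :: rest) u v hlast
      show w x y + walkCost w ((y :: rest) ++ [v])
          = (w x y + walkCost w (y :: rest)) + w u v
      rw [ih]; ring

lemma gdist_self {V : Type*} (w : V → V → ℝ≥0∞) (s : V) : gdist w s s = 0 := by
  refine le_antisymm ?_ zero_le
  apply sInf_le
  exact ⟨[s], by simp, by simp, rfl⟩

lemma gdist_triangle {V : Type*} (w : V → V → ℝ≥0∞) (s u v : V) :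
    gdist w s v ≤ gdist w s u + w u v := by
  unfold gdist
  rw [ENNReal.sInf_add]
  refine le_iInf₂ fun c hc => ?_
  obtain ⟨l, hh, hl, hcost⟩ := hc
  have hne : l ≠ [] := by rintro rfl; simp at hh
  apply sInf_le
  refine ⟨l ++ [v], ?_, ?_, ?_⟩
  · rw [List.head?_append_of_ne_nil _ hne]; exact hh
  · simp
  · rw [walkCost_append_single w l u v hl, hcost]

/-- Dijkstra's greedy selection is correct: with nonnegative weights, if
d(u) = dist(s,u) for u ∈ S (s ∈ S) and d(v) = min over u ∈ S of dist(s,u) + w(u,v) for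
v ∉ S, then a vertex v* ∉ S minimizing d satisfies d(v*) = dist(s, v*). -/
theorem stmt_17 {V : Type*} [Fintype V] (w : V → V → ℝ≥0∞) (s : V)
    (S : Finset V) (hs : s ∈ S) (d : V → ℝ≥0∞)
    (hdS : ∀ u ∈ S, d u = gdist w s u)
    (hdout : ∀ v ∉ S, d v = S.inf (fun u => gdist w s u + w u v))
    (vstar : V) (hv : vstar ∉ S) (hmin : ∀ v ∉ S, d vstar ≤ d v) :
    d vstar = gdist w s vstar := by
  have key : ∀ (l : List V) (x : V), l.head? = some x → l.getLast? = some vstar →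
      x ∈ S → d vstar ≤ gdist w s x + walkCost w l := by
    intro l
    induction l with
    | nil => intro x h; simp at h
    | cons a t ih =>
      intro x hh hl hx
      have hax : a = x := by simpa using hh
      subst hax
      match t with
      | [] =>
        simp only [List.getLast?_singleton, Option.some.injEq] at hl
        exact absurd hx (hl ▸ hv)
      | y :: rest =>
        have hl' : (y :: rest).getLast? = some vstar := by
          rw [List.getLast?_cons_cons] at hl; exact hl
        have hcost : walkCost w (a :: y :: rest) = w a y + walkCost w (y :: rest) := rfl
        by_cases hy : y ∈ S
        · have := ih y rfl hl' hy
          calc d vstar ≤ gdist w s y + walkCost w (y :: rest) := this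
            _ ≤ (gdist w s a + w a y) + walkCost w (y :: rest) := by
                gcongr; exact gdist_triangle w s a y
            _ = gdist w s a + walkCost w (a :: y :: rest) := by rw [hcost]; ring
        · have h1 : d vstar ≤ d y := hmin y hy
          have h2 : d y ≤ gdist w s a + w a y := by
            rw [hdout y hy]
            exact Finset.inf_le hx
          calc d vstar ≤ gdist w s a + w a y := h1.trans h2
            _ ≤ gdist w s a + (w a y + walkCost w (y :: rest)) := by
                rw [← add_assoc]; exact le_self_add
            _ = gdist w s a + walkCost w (a :: y :: rest) := by rw [hcost]
  refine le_antisymm ?_ ?_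
  · -- d vstar ≤ gdist
    apply le_sInf
    rintro c ⟨l, hh, hl, rfl⟩
    have := key l s hh hl hs
    rwa [gdist_self, zero_add] at this
  · -- gdist ≤ d vstar
    rw [hdout vstar hv]
    apply Finset.le_inf
    intro u hu
    exact gdist_triangle w s u vstar
end
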